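/- For any partitions λ and μ, the Littlewood–Richardson coefficient c_{λμ}^{λ+μ} is at least 1, where λ+μ is the partition whose i-th part is λ_i + μ_i. -/

import Mathlib

open scoped Classical

/-- The cells of the skew shape `nu / lam`. -/
def skewCells (lam nu : YoungDiagram) : Finset (ℕ × ℕ) := nu.cells \ lam.cells

/-- `d` is read before (or at) `c` in the reverse reading word: rows are read from
top to bottom, and each row from right to left. -/
def readsBefore (d c : ℕ × ℕ) : Prop := d.1 < c.1 ∨ (d.1 = c.1 ∧ c.2 ≤ d.2)

/-- `T` is a Littlewood–Richardson skew tableau of shape `nu / lam` and content `mu`: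
entries are positive exactly on the cells of `nu / lam`, rows weakly increase,
columns strictly increase, the number of entries equal to `k + 1` is the `k`-th part
of `mu`, and every prefix of the reverse reading word contains at least as many
entries `k + 1` as entries `k + 2` (the lattice word condition). -/
def IsLRFilling (lam mu nu : YoungDiagram) (T : ℕ × ℕ → ℕ) : Prop :=
  (∀ c : ℕ × ℕ, c ∈ skewCells lam nu ↔ T c ≠ 0) ∧
  (∀ i j : ℕ, (i, j) ∈ skewCells lam nu → (i, j + 1) ∈ skewCells lam nu →
      T (i, j) ≤ T (i, j + 1)) ∧
  (∀ i j : ℕ, (i, j) ∈ skewCells lam nu → (i + 1, j) ∈ skewCells lam nu →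
      T (i, j) < T (i + 1, j)) ∧
  (∀ k : ℕ, ((skewCells lam nu).filter fun c => T c = k + 1).card = mu.rowLen k) ∧
  (∀ c ∈ skewCells lam nu, ∀ k : ℕ,
      ((skewCells lam nu).filter fun d => readsBefore d c ∧ T d = k + 2).card ≤
      ((skewCells lam nu).filter fun d => readsBefore d c ∧ T d = k + 1).card)

/-- The Littlewood–Richardson coefficient `c_{lam,mu}^{nu}`, defined by the
Littlewood–Richardson rule as the number of Littlewood–Richardson skew tableaux of
shape `nu / lam` and content `mu`. -/
noncomputable def lrCoeff (lam mu nu : YoungDiagram) : ℕ :=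
  if lam ≤ nu then Nat.card { T : ℕ × ℕ → ℕ // IsLRFilling lam mu nu T } else 0

lemma mem_skewCells {lam nu : YoungDiagram} {i j : ℕ} :
    (i, j) ∈ skewCells lam nu ↔ lam.rowLen i ≤ j ∧ j < nu.rowLen i := by
  simp [skewCells, YoungDiagram.mem_cells, YoungDiagram.mem_iff_lt_rowLen, not_lt, and_comm]

/-- The LR fillings form a finite type. -/
lemma finite_lrFillings (lam mu nu : YoungDiagram) :
    Finite { T : ℕ × ℕ → ℕ // IsLRFilling lam mu nu T } := by
  have key : ∀ T : { T : ℕ × ℕ → ℕ // IsLRFilling lam mu nu T },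
      ∀ c ∈ skewCells lam nu, T.1 c ≤ mu.colLen 0 := by
    rintro ⟨T, h0, _, _, hcont, _⟩ c hc
    have hTc : T c ≠ 0 := (h0 c).1 hc
    obtain ⟨k, hk⟩ : ∃ k, T c = k + 1 := ⟨T c - 1, by omega⟩
    have hpos : 0 < mu.rowLen k := by
      rw [← hcont k]
      exact Finset.card_pos.2 ⟨c, Finset.mem_filter.2 ⟨hc, hk⟩⟩
    have : k < mu.colLen 0 := by
      rw [← YoungDiagram.mem_iff_lt_colLen, YoungDiagram.mem_iff_lt_rowLen]
      omega
    show T c ≤ mu.colLen 0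
    omega
  apply Finite.of_injective
    (fun T : { T : ℕ × ℕ → ℕ // IsLRFilling lam mu nu T } =>
      fun c : skewCells lam nu => (⟨T.1 c, Nat.lt_succ_of_le (key T c c.2)⟩ :
        Fin (mu.colLen 0 + 1)))
  rintro ⟨T, hT⟩ ⟨T', hT'⟩ h
  ext c
  by_cases hc : c ∈ skewCells lam nu
  · have := congrFun h ⟨c, hc⟩
    simpa using congrArg Fin.val this
  · have h1 : T c = 0 := by
      by_contra h'; exact hc ((hT.1 c).2 h')
    have h2 : T' c = 0 := by
      by_contra h'; exact hc ((hT'.1 c).2 h')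
    show T c = T' c
    rw [h1, h2]

/-- For any partitions `lam` and `mu`, the Littlewood–Richardson coefficient
`c_{lam,mu}^{lam + mu}` is at least `1`, where `lam + mu` is the partition whose
`i`-th part is `lam_i + mu_i`. -/
theorem one_le_lrCoeff_self_add (lam mu nu : YoungDiagram)
    (hnu : ∀ i : ℕ, nu.rowLen i = lam.rowLen i + mu.rowLen i) :
    1 ≤ lrCoeff lam mu nu := by
  have hle : lam ≤ nu := by
    intro c hc
    obtain ⟨i, j⟩ := c
    rw [YoungDiagram.mem_iff_lt_rowLen] at hc ⊢
    have := hnu i; omega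
  set T : ℕ × ℕ → ℕ := fun c => if c ∈ skewCells lam nu then c.1 + 1 else 0 with hTdef
  have hTmem : ∀ c ∈ skewCells lam nu, T c = c.1 + 1 := fun c hc => if_pos hc
  have hLR : IsLRFilling lam mu nu T := by
    refine ⟨?_, ?_, ?_, ?_, ?_⟩
    · intro c
      by_cases hc : c ∈ skewCells lam nu
      · simp [hTdef, hc]
      · simp [hTdef, hc]
    · intro i j h1 h2; rw [hTmem _ h1, hTmem _ h2]
    · intro i j h1 h2; rw [hTmem _ h1, hTmem _ h2]; omega
    · intro k
      have : (skewCells lam nu).filter (fun c => T c = k + 1) =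
          (Finset.Ico (lam.rowLen k) (nu.rowLen k)).image (fun j => (k, j)) := by
        ext ⟨i, j⟩
        simp only [Finset.mem_filter, Finset.mem_image, Finset.mem_Ico]
        constructor
        · rintro ⟨hc, hT⟩
          rw [hTmem _ hc] at hT
          have hi : i = k := by omega
          subst hi
          rw [mem_skewCells] at hc
          exact ⟨j, hc, rfl⟩
        · rintro ⟨j', hj', h⟩
          obtain ⟨h1, h2⟩ := Prod.ext_iff.mp h
          simp only at h1 h2
          subst h1; subst h2
          have hc : (k, j') ∈ skewCells lam nu := mem_skewCells.2 hj'
          exact ⟨hc, by rw [hTmem _ hc]⟩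
      rw [this, Finset.card_image_of_injective _ (fun a b h => by simpa using h),
        Nat.card_Ico]
      have := hnu k; omega
    · intro c hc k
      apply Finset.card_le_card_of_injOn
        (fun d => (k, lam.rowLen k + (d.2 - lam.rowLen (k + 1))))
      · intro d hd
        simp only [Finset.coe_filter, Finset.mem_filter, Set.mem_setOf_eq, Finset.mem_coe] at hd ⊢
        obtain ⟨hdS, hrb, hTd⟩ := hd
        rw [hTmem _ hdS] at hTd
        obtain ⟨i, j⟩ := d
        have hik : i = k + 1 := by omega
        subst hik
        rw [mem_skewCells] at hdS
        have hmono : mu.rowLen (k + 1) ≤ mu.rowLen k :=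
          mu.rowLen_anti k (k + 1) (by omega)
        have h1 := hnu k
        have h2 := hnu (k + 1)
        have hmem : (k, lam.rowLen k + (j - lam.rowLen (k + 1))) ∈ skewCells lam nu :=
          mem_skewCells.2 (by omega)
        refine ⟨hmem, ?_, by rw [hTmem _ hmem]⟩
        rcases hrb with h | h
        · exact Or.inl (by simp at h ⊢; omega)
        · exact Or.inl (by simp at h ⊢; omega)
      · intro d hd d' hd' h
        simp only [Finset.coe_filter, Set.mem_setOf_eq] at hd hd'
        obtain ⟨hdS, _, hTd⟩ := hd
        obtain ⟨hdS', _, hTd'⟩ := hd'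
        rw [hTmem _ hdS] at hTd
        rw [hTmem _ hdS'] at hTd'
        obtain ⟨i, j⟩ := d
        obtain ⟨i', j'⟩ := d'
        simp only at hTd hTd'
        have : i = k + 1 := by omega
        have : i' = k + 1 := by omega
        subst ‹i = k + 1›; subst ‹i' = k + 1›
        rw [mem_skewCells] at hdS hdS'
        have h2 := congrArg Prod.snd h
        simp only at h2
        have : j = j' := by omega
        simp [this]
  rw [lrCoeff, if_pos hle]
  have := finite_lrFillings lam mu nu
  exact Nat.one_le_iff_ne_zero.2 (Nat.card_ne_zero.2 ⟨⟨⟨T, hLR⟩⟩, this⟩)
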